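/- With hypotheses as in the shifted-orbit estimate (P an infinitesimal κ-contraction with 0 < κ < 0.1, E_1(x) - x = δ for x ∈ [-4δ, 4δ] and E_1(x) - x ≤ δ everywhere, δ > 0): if N ∈ ℕ is such that P^N(q) ∈ [-κδ, 0] and P ∘ (E_1 ∘ P)^{N-1}(q) ∈ [-4δ, 4δ], then (E_1 ∘ P)^N(q) ≥ -3κδ + δ > 0. Consequently, since (E_0 ∘ P)^N(q) = P^N(q) ≤ 0 and λ ↦ (E_λ ∘ P)^N(q) is continuous, there exists λ ∈ [0,1] with (E_λ ∘ P)^N(q) = 0. -/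
import Mathlib


open Filter Set Function

/-- Final step of the proof of Lemma `lem10`: if `P^N(q) ∈ [-κδ, 0]` and the shifted
orbit estimate holds, then `(E_1 ∘ P)^N(q) ≥ -3κδ + δ > 0`; hence by continuity in `λ`
and `E_0 = id` there is `λ ∈ [0,1]` with `(E_λ ∘ P)^N(q) = 0`. -/
theorem stmt9 (κ δ : ℝ) (hκ0 : 0 < κ) (hκ : κ < 0.1) (hδ : 0 < δ)
    (P : ℝ → ℝ) (E : ℝ → ℝ → ℝ)
    (hE0 : ∀ x, E 0 x = x)
    (hEeq : ∀ lam ∈ Set.Icc (0:ℝ) 1, ∀ x ∈ Set.Icc (-(4*δ)) (4*δ), E lam x - x = lam * δ)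
    (hEle : ∀ lam ∈ Set.Icc (0:ℝ) 1, ∀ x : ℝ, E lam x - x ≤ lam * δ)
    (q : ℝ) (N : ℕ) (hN : 1 ≤ N)
    (hcont : Continuous fun lam => (fun x => E lam (P x))^[N] q)
    (hest : |P ((fun x => E 1 (P x))^[N-1] q) - P^[N] q| ≤ κ * δ / (1 - κ))
    (hPN : P^[N] q ∈ Set.Icc (-(κ*δ)) 0)
    (hIn : P ((fun x => E 1 (P x))^[N-1] q) ∈ Set.Icc (-(4*δ)) (4*δ)) :
    ((fun x => E 1 (P x))^[N] q ≥ -3*κ*δ + δ ∧ 0 < -3*κ*δ + δ) ∧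
      ∃ lam ∈ Set.Icc (0:ℝ) 1, (fun x => E lam (P x))^[N] q = 0 := by
  set y := P ((fun x => E 1 (P x))^[N-1] q) with hy
  have hiter : (fun x => E 1 (P x))^[N] q = E 1 y := by
    have : N = (N - 1) + 1 := (Nat.succ_pred_eq_of_pos hN).symm
    rw [this, Function.iterate_succ_apply']
  have h1 : (1:ℝ) ∈ Set.Icc (0:ℝ) 1 := ⟨zero_le_one, le_refl 1⟩
  have hEy : E 1 y = y + δ := by
    have := hEeq 1 h1 y hIn
    linarith
  have habs := abs_le.mp hest
  have hκδ : κ * δ / (1 - κ) ≤ 2 * κ * δ := by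
    rw [div_le_iff₀ (by linarith)]
    nlinarith [mul_pos hκ0 hδ]
  have hylb : y ≥ -(3*κ*δ) := by
    have := hPN.1
    linarith
  have hge : (fun x => E 1 (P x))^[N] q ≥ -3*κ*δ + δ := by
    rw [hiter, hEy]; linarith
  have hpos : 0 < -3*κ*δ + δ := by nlinarith
  refine ⟨⟨hge, hpos⟩, ?_⟩
  have hf0 : (fun lam => (fun x => E lam (P x))^[N] q) 0 ≤ 0 := by
    have heq : (fun x => E 0 (P x))^[N] q = P^[N] q := by
      congr 1
      funext x
      simp [hE0]
    simpa [heq] using hPN.2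
  have hf1 : 0 ≤ (fun lam => (fun x => E lam (P x))^[N] q) 1 := by
    simpa using le_of_lt (lt_of_lt_of_le hpos hge)
  have := intermediate_value_Icc (zero_le_one) hcont.continuousOn
  have hmem : (0:ℝ) ∈ Set.Icc ((fun lam => (fun x => E lam (P x))^[N] q) 0)
      ((fun lam => (fun x => E lam (P x))^[N] q) 1) := ⟨hf0, hf1⟩
  obtain ⟨lam, hlam, hval⟩ := this hmem
  exact ⟨lam, hlam, hval⟩
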